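/- Every point (t,x) with t ∈ [0,T) and x > K belongs to the continuation set, i.e. V(t,x) > G(t,x) = 0. -/

import Mathlib

open MeasureTheory ProbabilityTheory Real Set Filter

noncomputable section

/-- Geometric Brownian motion with parameters `r`, `σ`, started at `x`,
driven by the process `W`: `X^x_t = x · exp((r - σ²/2)t + σ W_t)`. -/
def GBM {Ω : Type} (r σ x : ℝ) (W : ℝ → Ω → ℝ) (t : ℝ) (ω : Ω) : ℝ :=
  x * Real.exp ((r - σ ^ 2 / 2) * t + σ * W t ω)

/-- `W` is a standard Brownian motion with respect to the filtration `F` under the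
probability measure `P`: it starts at `0`, has continuous paths, is adapted to `F`,
has Gaussian increments `W t - W s ∼ N(0, t - s)`, and its increments after time `s`
are independent of `F s`. -/
structure IsStdBM {Ω : Type} [mΩ : MeasurableSpace Ω] (P : Measure Ω)
    (F : Filtration ℝ mΩ) (W : ℝ → Ω → ℝ) : Prop where
  init : ∀ ω, W 0 ω = 0
  cont : ∀ ω, Continuous fun t => W t ω
  adapted : ∀ t : ℝ, Measurable[F t] (W t)
  incr_law : ∀ s t : ℝ, 0 ≤ s → s ≤ t →
      Measure.map (fun ω => W t ω - W s ω) P = gaussianReal 0 (Real.toNNReal (t - s))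
  incr_indep : ∀ s t : ℝ, 0 ≤ s → s ≤ t →
      Indep (MeasurableSpace.comap (fun ω => W t ω - W s ω) Real.measurableSpace) (F s) P

/-- The standard normal cumulative distribution function `Φ`. -/
def stdCDF (y : ℝ) : ℝ := ∫ z in Iic y, Real.exp (-z ^ 2 / 2) / Real.sqrt (2 * π)

/-- The finite-horizon Azéma supermartingale function `Z(t,x)` (with `α = 2r/σ² - 1`):
for `t < T`, `Z(t,x) = min{Φ(d₁) + (L/x)^α Φ(d₂), 1}`, and at `t = T` it is `1` for
`x ≥ L` and `0` for `x < L`. -/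
def Zt (r σ L T t x : ℝ) : ℝ :=
  if t < T then
    min (stdCDF ((-Real.log (L / x) + (r - σ ^ 2 / 2) * (T - t)) / (σ * Real.sqrt (T - t))) +
        (L / x) ^ (2 * r / σ ^ 2 - 1) *
          stdCDF ((-Real.log (L / x) - (r - σ ^ 2 / 2) * (T - t)) / (σ * Real.sqrt (T - t)))) 1
  else if L ≤ x then 1 else 0

/-- The finite-horizon gain function `G(t,x) = (K - x)⁺ · Z(t,x)`. -/
def gainT (r σ L K T t x : ℝ) : ℝ := max (K - x) 0 * Zt r σ L T t x

/-- The finite-horizon value function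
`V(t,x) = sup_{0 ≤ τ ≤ T - t} E[e^{-rτ} G(t + τ, X^x_τ)]`, the supremum being taken
over all `F`-stopping times `τ` with `0 ≤ τ ≤ T - t` almost surely. -/
def valueT {Ω : Type} [mΩ : MeasurableSpace Ω] (P : Measure Ω) (F : Filtration ℝ mΩ)
    (W : ℝ → Ω → ℝ) (r σ L K T t x : ℝ) : ℝ :=
  ⨆ τ : {τ : Ω → ℝ // IsStoppingTime F (fun ω => (τ ω : WithTop ℝ)) ∧ ∀ᵐ ω ∂P, τ ω ∈ Icc 0 (T - t)},
    ∫ ω, Real.exp (-r * τ.1 ω) * gainT r σ L K T (t + τ.1 ω) (GBM r σ x W (τ.1 ω) ω) ∂P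

lemma stdCDF_nonneg (y : ℝ) : 0 ≤ stdCDF y := by
  unfold stdCDF
  exact setIntegral_nonneg measurableSet_Iic fun z _ =>
    div_nonneg (Real.exp_nonneg _) (Real.sqrt_nonneg _)

lemma Zt_nonneg (r σ L T t x : ℝ) (hL : 0 ≤ L) (hx : 0 < x) : 0 ≤ Zt r σ L T t x := by
  unfold Zt
  split_ifs with h1 h2
  · exact le_min (add_nonneg (stdCDF_nonneg _)
      (mul_nonneg (Real.rpow_nonneg (div_nonneg hL hx.le) _) (stdCDF_nonneg _))) zero_le_one
  · exact zero_le_one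
  · exact le_refl 0

lemma Zt_le_one (r σ L T t x : ℝ) : Zt r σ L T t x ≤ 1 := by
  unfold Zt
  split_ifs with h1 h2
  · exact min_le_right _ _
  · exact le_refl 1
  · exact zero_le_one

lemma gainT_nonneg (r σ L K T t x : ℝ) (hL : 0 ≤ L) (hx : 0 < x) :
    0 ≤ gainT r σ L K T t x :=
  mul_nonneg (le_max_right _ _) (Zt_nonneg r σ L T t x hL hx)

lemma gainT_le (r σ L K T t x : ℝ) (hL : 0 ≤ L) (hK : 0 ≤ K) (hx : 0 < x) :
    gainT r σ L K T t x ≤ K := by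
  have h1 : gainT r σ L K T t x ≤ max (K - x) 0 * 1 :=
    mul_le_mul_of_nonneg_left (Zt_le_one r σ L T t x) (le_max_right _ _)
  have h2 : max (K - x) 0 ≤ K := max_le (by linarith) hK
  calc gainT r σ L K T t x ≤ max (K - x) 0 * 1 := h1
    _ = max (K - x) 0 := mul_one _
    _ ≤ K := h2

/-- Every point `(t,x)` with `t ∈ [0,T)` and `x > K` belongs to the
continuation set, i.e. `V(t,x) > G(t,x) = 0`. -/
theorem stmt_11 {Ω : Type} [mΩ : MeasurableSpace Ω] (P : Measure Ω) [IsProbabilityMeasure P]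
    (F : Filtration ℝ mΩ) (W : ℝ → Ω → ℝ) (hW : IsStdBM P F W)
    (r σ L K T : ℝ) (hr : 0 < r) (hσ : 0 < σ) (hL : 0 < L) (hLK : L < K) (hT : 0 < T) :
    ∀ t ∈ Ico (0 : ℝ) T, ∀ x : ℝ, K < x →
      valueT P F W r σ L K T t x > gainT r σ L K T t x ∧ gainT r σ L K T t x = 0 := by
  intro t ht x hx
  obtain ⟨ht0, htT⟩ := ht
  have hK0 : (0:ℝ) < K := lt_trans hL hLK
  have hx0 : (0:ℝ) < x := lt_trans hK0 hx
  have hG : gainT r σ L K T t x = 0 := by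
    unfold gainT
    rw [max_eq_right (by linarith), zero_mul]
  refine ⟨?_, hG⟩
  rw [hG]
  set s : ℝ := T - t with hs_def
  have hs0 : 0 < s := by simp only [hs_def]; linarith
  -- measurability of W s
  have hWs : Measurable (W s) := (hW.adapted s).mono (F.le s) le_rfl
  -- the law of W s
  have hlaw : Measure.map (W s) P = gaussianReal 0 (Real.toNNReal s) := by
    have h := hW.incr_law 0 s le_rfl hs0.le
    have heq : (fun ω => W s ω - W 0 ω) = W s := by
      funext ω; rw [hW.init]; ring
    rw [heq] at h
    rw [h, sub_zero]
  -- the constant stopping time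
  set τ0 : {τ : Ω → ℝ // IsStoppingTime F (fun ω => (τ ω : WithTop ℝ)) ∧ ∀ᵐ ω ∂P, τ ω ∈ Icc 0 (T - t)} :=
    ⟨fun _ => s, isStoppingTime_const F s, ae_of_all _ fun ω => ⟨hs0.le, le_refl _⟩⟩ with hτ0_def
  -- GBM at time s is positive
  have hGBM_pos : ∀ ω, 0 < GBM r σ x W s ω := fun ω =>
    mul_pos hx0 (Real.exp_pos _)
  -- the integrand for τ0
  set h : Ω → ℝ := fun ω => gainT r σ L K T T (GBM r σ x W s ω) with hh_def
  have hTs : t + s = T := by simp [hs_def]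
  -- gainT at time T, simplified
  have hgT : ∀ y : ℝ, gainT r σ L K T T y = max (K - y) 0 * (if L ≤ y then 1 else 0) := by
    intro y
    unfold gainT Zt
    rw [if_neg (lt_irrefl T)]
  -- measurability of h
  have hgmeas : Measurable fun y : ℝ => gainT r σ L K T T y := by
    simp only [hgT]
    exact ((measurable_const.sub measurable_id).max measurable_const).mul
      (Measurable.ite (measurableSet_le measurable_const measurable_id)
        measurable_const measurable_const)
  have hXmeas : Measurable (GBM r σ x W s) := by
    unfold GBM
    exact measurable_const.mul ((measurable_const.add (hWs.const_mul σ)).exp)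
  have hhmeas : Measurable h := hgmeas.comp hXmeas
  have hhnonneg : ∀ ω, 0 ≤ h ω := fun ω =>
    gainT_nonneg r σ L K T T _ hL.le (hGBM_pos ω)
  have hhle : ∀ ω, h ω ≤ K := fun ω =>
    gainT_le r σ L K T T _ hL.le hK0.le (hGBM_pos ω)
  have hhint : Integrable h P := by
    refine Integrable.mono' (integrable_const K) hhmeas.aestronglyMeasurable ?_
    exact ae_of_all _ fun ω => by
      rw [Real.norm_eq_abs, abs_of_nonneg (hhnonneg ω)]; exact hhle ω
  -- positivity of ∫ h
  set c : ℝ := (r - σ ^ 2 / 2) * s with hc_def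
  set a : ℝ := (Real.log (L / x) - c) / σ with ha_def
  set b : ℝ := (Real.log (K / x) - c) / σ with hb_def
  have hab : a < b := by
    have hlog : Real.log (L / x) < Real.log (K / x) :=
      Real.log_lt_log (div_pos hL hx0) ((div_lt_div_iff_of_pos_right hx0).mpr hLK)
    exact (div_lt_div_iff_of_pos_right hσ).mpr (sub_lt_sub_right hlog c)
  have hsupp : W s ⁻¹' Ico a b ⊆ Function.support h := by
    intro ω hω
    obtain ⟨hωa, hωb⟩ := hω
    have hXeq : GBM r σ x W s ω = x * Real.exp (c + σ * W s ω) := by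
      unfold GBM; rw [hc_def]
    have hL_le : L ≤ GBM r σ x W s ω := by
      have h1 : Real.log (L / x) ≤ c + σ * W s ω := by
        have := (div_le_iff₀ hσ).mp hωa
        nlinarith [this]
      have h2 : L / x ≤ Real.exp (c + σ * W s ω) := by
        rw [← Real.exp_log (div_pos hL hx0)]
        exact Real.exp_le_exp.mpr h1
      rw [hXeq]
      calc L = x * (L / x) := by field_simp
        _ ≤ x * Real.exp (c + σ * W s ω) := mul_le_mul_of_nonneg_left h2 hx0.le
    have hK_lt : GBM r σ x W s ω < K := by
      have h1 : c + σ * W s ω < Real.log (K / x) := by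
        have := (lt_div_iff₀ hσ).mp hωb
        nlinarith [this]
      have h2 : Real.exp (c + σ * W s ω) < K / x := by
        rw [← Real.exp_log (div_pos hK0 hx0)]
        exact Real.exp_lt_exp.mpr h1
      rw [hXeq]
      calc x * Real.exp (c + σ * W s ω) < x * (K / x) :=
            mul_lt_mul_of_pos_left h2 hx0
        _ = K := by field_simp
    have : h ω = K - GBM r σ x W s ω := by
      simp only [hh_def, hgT, if_pos hL_le, mul_one]
      exact max_eq_left (by linarith)
    simp only [Function.mem_support, this]
    intro h0
    linarith
  have hv : Real.toNNReal s ≠ 0 := by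
    simp only [ne_eq, Real.toNNReal_eq_zero, not_le]
    exact hs0
  have hmap : P (W s ⁻¹' Ico a b) = gaussianReal 0 (Real.toNNReal s) (Ico a b) := by
    rw [← hlaw, Measure.map_apply hWs measurableSet_Ico]
  have hgpos : gaussianReal 0 (Real.toNNReal s) (Ico a b) ≠ 0 := by
    intro h0
    have hvol := gaussianReal_absolutelyContinuous' 0 hv h0
    rw [Real.volume_Ico] at hvol
    exact (ENNReal.ofReal_pos.mpr (by linarith)).ne' hvol
  have hPpos : 0 < P (Function.support h) := by
    have h1 : 0 < P (W s ⁻¹' Ico a b) := by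
      rw [hmap]
      exact lt_of_le_of_ne zero_le (Ne.symm hgpos)
    exact lt_of_lt_of_le h1 (measure_mono hsupp)
  have hint_pos : 0 < ∫ ω, h ω ∂P := by
    rw [integral_pos_iff_support_of_nonneg_ae (ae_of_all _ hhnonneg) hhint]
    exact hPpos
  -- boundedness of the supremum family
  have hbdd : BddAbove (Set.range fun τ :
      {τ : Ω → ℝ // IsStoppingTime F (fun ω => (τ ω : WithTop ℝ)) ∧ ∀ᵐ ω ∂P, τ ω ∈ Icc 0 (T - t)} =>
      ∫ ω, Real.exp (-r * τ.1 ω) * gainT r σ L K T (t + τ.1 ω) (GBM r σ x W (τ.1 ω) ω) ∂P) := by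
    refine ⟨K, ?_⟩
    rintro y ⟨τ, rfl⟩
    dsimp only
    by_cases hint : Integrable (fun ω =>
        Real.exp (-r * τ.1 ω) * gainT r σ L K T (t + τ.1 ω) (GBM r σ x W (τ.1 ω) ω)) P
    · have hle : (fun ω =>
          Real.exp (-r * τ.1 ω) * gainT r σ L K T (t + τ.1 ω) (GBM r σ x W (τ.1 ω) ω))
          ≤ᵐ[P] fun _ => K := by
        filter_upwards [τ.2.2] with ω hω
        have hτpos : 0 ≤ τ.1 ω := hω.1
        have hXpos : 0 < GBM r σ x W (τ.1 ω) ω := mul_pos hx0 (Real.exp_pos _)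
        have h1 : Real.exp (-r * τ.1 ω) ≤ 1 := by
          rw [Real.exp_le_one_iff]
          nlinarith
        calc Real.exp (-r * τ.1 ω) * gainT r σ L K T (t + τ.1 ω) (GBM r σ x W (τ.1 ω) ω)
            ≤ 1 * gainT r σ L K T (t + τ.1 ω) (GBM r σ x W (τ.1 ω) ω) :=
              mul_le_mul_of_nonneg_right h1 (gainT_nonneg _ _ _ _ _ _ _ hL.le hXpos)
          _ = gainT r σ L K T (t + τ.1 ω) (GBM r σ x W (τ.1 ω) ω) := one_mul _
          _ ≤ K := gainT_le _ _ _ _ _ _ _ hL.le hK0.le hXpos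
      calc ∫ ω, Real.exp (-r * τ.1 ω) * gainT r σ L K T (t + τ.1 ω) (GBM r σ x W (τ.1 ω) ω) ∂P
          ≤ ∫ _, K ∂P := integral_mono_ae hint (integrable_const K) hle
        _ = K := by simp
    · rw [integral_undef hint]
      exact hK0.le
  -- value of the constant stopping time
  have hτ0val : (∫ ω, Real.exp (-r * τ0.1 ω) *
      gainT r σ L K T (t + τ0.1 ω) (GBM r σ x W (τ0.1 ω) ω) ∂P)
      = Real.exp (-r * s) * ∫ ω, h ω ∂P := by
    rw [← integral_const_mul]
    congr 1
    funext ω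
    simp only [hτ0_def, hh_def, hTs]
  have hpos : 0 < Real.exp (-r * s) * ∫ ω, h ω ∂P :=
    mul_pos (Real.exp_pos _) hint_pos
  unfold valueT
  calc (0:ℝ) < Real.exp (-r * s) * ∫ ω, h ω ∂P := hpos
    _ = ∫ ω, Real.exp (-r * τ0.1 ω) *
        gainT r σ L K T (t + τ0.1 ω) (GBM r σ x W (τ0.1 ω) ω) ∂P := hτ0val.symm
    _ ≤ _ := le_ciSup hbdd τ0

end
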